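/- The following are equivalent: (1) for every integer n ≥ 1 there exists k with T^k(n) = 1; (2) for every integer n ≥ 1 with n ≡ 2 (mod 3) there exists k with F^k(n) = 2. -/
import Mathlib


/-- The Collatz function. -/
def T (n : ℤ) : ℤ := if n % 2 = 0 then n / 2 else (3 * n + 1) / 2

/-- The map `F`, defined on integers congruent to 2 (mod 3):
`F n = T n` if `n ≡ 5 (mod 6)` and `F n = T (T n)` if `n ≡ 2 (mod 6)`. -/
def F (n : ℤ) : ℤ := if n % 6 = 5 then T n else T (T n)

lemma Fmod (n : ℤ) (h : n % 3 = 2) : F n % 3 = 2 := by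
  unfold F T; split_ifs <;> omega

lemma FeqT (n : ℤ) : F n = T n ∨ F n = T (T n) := by
  unfold F; split_ifs
  · exact Or.inl rfl
  · exact Or.inr rfl

lemma FT (n : ℤ) (h : n % 3 = 2) :
    ∀ k : ℕ, ∃ m : ℕ, k ≤ m ∧ F^[k] n = T^[m] n ∧ F^[k] n % 3 = 2 := by
  intro k
  induction k with
  | zero => exact ⟨0, le_refl _, rfl, h⟩
  | succ k ih =>
    obtain ⟨m, hkm, hm, hmod⟩ := ih
    have hmod' : F^[k+1] n % 3 = 2 := by
      rw [Function.iterate_succ_apply']; exact Fmod _ hmod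
    rcases FeqT (F^[k] n) with h1 | h1
    · refine ⟨m + 1, by omega, ?_, hmod'⟩
      rw [Function.iterate_succ_apply', Function.iterate_succ_apply', h1, hm]
    · refine ⟨m + 2, by omega, ?_, hmod'⟩
      rw [Function.iterate_succ_apply', h1, hm]
      rw [show m + 2 = (m + 1) + 1 from rfl, Function.iterate_succ_apply',
        Function.iterate_succ_apply']

lemma Tone : ∀ j : ℕ, T^[j] 1 = 1 ∨ T^[j] 1 = 2 := by
  intro j
  induction j with
  | zero => exact Or.inl rfl
  | succ j ih =>
    rw [Function.iterate_succ_apply']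
    rcases ih with h | h <;> rw [h]
    · right; decide
    · left; decide

theorem stmt_4 :
    (∀ n : ℤ, 1 ≤ n → ∃ k : ℕ, T^[k] n = 1) ↔
      (∀ n : ℤ, 1 ≤ n → n % 3 = 2 → ∃ k : ℕ, F^[k] n = 2) := by
  constructor
  · intro H n hn hmod
    obtain ⟨m, hm⟩ := H n hn
    obtain ⟨M, hM, heq, hmod'⟩ := FT n hmod m
    have h1 : T^[M] n = T^[M - m] (T^[m] n) := by
      rw [← Function.iterate_add_apply]; congr 1; omega
    rw [hm] at h1
    rcases Tone (M - m) with h2 | h2 <;> rw [h2] at h1 <;> rw [h1] at heq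
    · omega
    · exact ⟨m, heq⟩
  · intro H
    have main : ∀ N : ℕ, ∀ n : ℤ, 1 ≤ n → n ≤ (N : ℤ) → ∃ k : ℕ, T^[k] n = 1 := by
      intro N
      induction N with
      | zero => intro n h1 h2; omega
      | succ N ih =>
        intro n h1 h2
        by_cases he : n % 2 = 0
        · have hT : T n = n / 2 := by unfold T; simp [he]
          obtain ⟨k, hk⟩ := ih (n / 2) (by omega) (by push_cast; omega)
          exact ⟨k + 1, by rw [Function.iterate_succ_apply, hT, hk]⟩
        · have hT : T n % 3 = 2 ∧ 1 ≤ T n := by unfold T; split_ifs <;> omega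
          obtain ⟨k, hk⟩ := H (T n) hT.2 hT.1
          obtain ⟨m, _, heq, _⟩ := FT (T n) hT.1 k
          rw [heq] at hk
          refine ⟨m + 2, ?_⟩
          have h2 : T^[m + 1] n = 2 := by
            rw [Function.iterate_succ_apply, hk]
          rw [show m + 2 = (m + 1) + 1 from rfl, Function.iterate_succ_apply', h2]
          decide
    intro n hn
    exact main n.toNat n hn (by omega)
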